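/- Let I be a t-ideal of a PVMD R, let {Q_α} be the set of all maximal prime ideals of Z(R,I) (the primes of Z(R,I) maximal under inclusion), and let {M_β} be the set of t-maximal ideals of R that do not contain I. Then: (1) (I:I) ⊇ (⋂_α R_{Q_α}) ∩ (⋂_β R_{M_β}); and (2) if R is a tQR-domain, then equality holds. -/

import Mathlib

/-!
Common definitions: star operations (`v`- and `t`-closure), `t`-ideals, `t`-invertibility,
PVMDs, overrings, `t`-linked and `t`-flat overrings, localizations inside the quotient
field, Nagata and Kaplansky transforms, endomorphism rings of ideals.
-/

open scoped Classical

namespace PVMDPaper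

noncomputable section

section Generic

variable (A : Type*) [CommRing A] (K : Type*) [Field K] [Algebra A K]

/-- The image of an integral ideal of `A` inside the field `K`, as an `A`-submodule of `K`. -/
def toK (I : Ideal A) : Submodule A K := Submodule.map (Algebra.linearMap A K) I

variable {A K}

/-- The dual `I⁻¹ = (A : I) = {x ∈ K : x I ⊆ A}` of a submodule of `K`. -/
def dual (I : Submodule A K) : Submodule A K := 1 / I

/-- The `v`-closure `I_v = (I⁻¹)⁻¹`. -/
def vOp (I : Submodule A K) : Submodule A K := 1 / (1 / I)

/-- The `t`-closure `I_t`: the union of `J_v` where `J` ranges over the nonzero finitely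
generated submodules `J ≤ I` (the union of this directed family is its supremum). -/
def tOp (I : Submodule A K) : Submodule A K :=
  sSup {V | ∃ J : Submodule A K, J ≠ ⊥ ∧ J.FG ∧ J ≤ I ∧ V = vOp J}

variable (K)

/-- An (integral) ideal `I` of `A` is a `t`-ideal if `I = I_t`. -/
def IsTIdeal (I : Ideal A) : Prop := tOp (toK A K I) = toK A K I

/-- An ideal `I` is `t`-invertible if `(I I⁻¹)_t = A`. -/
def IsTInvertible (I : Ideal A) : Prop := tOp (toK A K I * dual (toK A K I)) = 1

/-- A `t`-maximal ideal: an ideal maximal in the set of proper integral `t`-ideals. -/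
def IsTMaximal (M : Ideal A) : Prop :=
  M ≠ ⊤ ∧ IsTIdeal K M ∧ ∀ J : Ideal A, J ≠ ⊤ → IsTIdeal K J → M ≤ J → J = M

variable (A)

/-- `A` is a Prüfer `v`-multiplication domain: every nonzero finitely generated ideal
is `t`-invertible. -/
def IsPVMD : Prop := ∀ I : Ideal A, I ≠ ⊥ → I.FG → IsTInvertible K I

/-- `Spec_t(A)` is Noetherian: the ascending chain condition on radical `t`-ideals. -/
def TSpecNoetherian : Prop :=
  ∀ f : ℕ →o Ideal A, (∀ n, IsTIdeal K (f n) ∧ (f n).radical = f n) →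
    ∃ n, ∀ m, n ≤ m → f m = f n

variable {A K}

/-- A submodule of `K` is a subring of `K` iff it contains `1` and is closed under
multiplication (being an additive subgroup already). -/
def IsSubringOf (S : Submodule A K) : Prop :=
  (1 : K) ∈ S ∧ ∀ x ∈ S, ∀ y ∈ S, x * y ∈ S

variable (K)

/-- The localization `A_P = {a/s : a ∈ A, s ∈ A ∖ P}` viewed as a subset of `K`. -/
def loc (P : Ideal A) : Set K :=
  {x | ∃ a s : A, s ∉ P ∧ x * algebraMap A K s = algebraMap A K a}

/-- The set `J A_P = {a/s : a ∈ J, s ∈ A ∖ P} ⊆ K`. -/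
def locIdealAt (J P : Ideal A) : Set K :=
  {x | ∃ a ∈ J, ∃ s : A, s ∉ P ∧ x * algebraMap A K s = algebraMap A K a}

/-- `Z(A, I)`: the set of zero divisors on `A/I`. -/
def ZSet (I : Ideal A) : Set A := {x | ∃ a : A, a ∉ I ∧ x * a ∈ I}

/-- `Q` is a maximal prime ideal of `Z(A,I)`: a prime contained in `Z(A,I)`, maximal
(under inclusion) among the primes contained in `Z(A,I)`. -/
def MaxPrimeOfZ (I Q : Ideal A) : Prop :=
  Q.IsPrime ∧ (Q : Set A) ⊆ ZSet I ∧
    ∀ Q' : Ideal A, Q'.IsPrime → (Q' : Set A) ⊆ ZSet I → Q ≤ Q' → Q' = Q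

end Generic

section Overring

variable {R : Type*} [CommRing R] [IsDomain R]
variable {K : Type*} [Field K] [Algebra R K] [IsFractionRing R K]

/-- The extension `IT` of an ideal `I` of `R` to an overring `T`, as a `T`-submodule of `K`. -/
def extendI (I : Ideal R) (T : Subalgebra R K) : Submodule T K :=
  Submodule.span T (algebraMap R K '' (I : Set R))

/-- The extension `IT` of an `R`-submodule `I` of `K` to an overring `T`. -/
def extendS (I : Submodule R K) (T : Subalgebra R K) : Submodule T K :=
  Submodule.span T (I : Set K)

/-- An overring `T` of `R` is `t`-linked over `R` if `(IT)⁻¹ = T` for each finitely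
generated ideal `I` of `R` with `I⁻¹ = R`. -/
def IsTLinked (T : Subalgebra R K) : Prop :=
  ∀ I : Ideal R, I.FG → dual (toK R K I) = 1 → dual (extendI I T) = 1

/-- An overring `T` of `R` is `t`-flat over `R` if `T_M = R_{M ∩ R}` for each
`t`-maximal ideal `M` of `T`. -/
def IsTFlat (T : Subalgebra R K) : Prop :=
  ∀ M : Ideal T, IsTMaximal K M → loc K M = loc K (M.comap (algebraMap R T))

variable (R K)

/-- `R` is a `tQR`-domain: a PVMD all of whose `t`-linked overrings are localizations
of `R` at multiplicative sets. -/
def IsTQR : Prop :=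
  IsPVMD R K ∧ ∀ T : Subalgebra R K, IsTLinked T → ∃ S : Submonoid R,
    (T : Set K) = {x | ∃ a : R, ∃ s ∈ S, x * algebraMap R K s = algebraMap R K a}

variable {R K}
variable (K)

/-- The endomorphism ring `(I : I) = {x ∈ K : x I ⊆ I}` of an ideal `I`, as an
overring of `R`. -/
def endoRing (I : Ideal R) : Subalgebra R K where
  carrier := {x : K | ∀ y ∈ toK R K I, x * y ∈ toK R K I}
  mul_mem' := by
    intro a b ha hb y hy
    rw [mul_assoc]
    exact ha _ (hb _ hy)
  one_mem' := by
    intro y hy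
    rwa [one_mul]
  add_mem' := by
    intro a b ha hb y hy
    rw [add_mul]
    exact Submodule.add_mem _ (ha y hy) (hb y hy)
  zero_mem' := by
    intro y hy
    rw [zero_mul]
    exact Submodule.zero_mem _
  algebraMap_mem' := by
    intro r y hy
    rw [← Algebra.smul_def]
    exact Submodule.smul_mem _ r hy

set_option synthInstance.maxHeartbeats 400000 in
/-- The ideal `I`, viewed as an ideal of its endomorphism ring `(I : I)`. -/
def idealInEndo (I : Ideal R) : Ideal (endoRing K I) where
  carrier := {x | (x : K) ∈ toK R K I}
  add_mem' := by
    intro a b ha hb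
    simp only [Set.mem_setOf_eq] at *
    rw [AddMemClass.coe_add]
    exact Submodule.add_mem _ ha hb
  zero_mem' := by
    simp only [Set.mem_setOf_eq, ZeroMemClass.coe_zero]
    exact Submodule.zero_mem _
  smul_mem' := by
    intro c x hx
    simp only [Set.mem_setOf_eq] at *
    rw [smul_eq_mul, MulMemClass.coe_mul]
    exact c.2 _ hx

/-- The Kaplansky transform `Ω(I) = {u ∈ K : ∀ a ∈ I, ∃ n ≥ 1, u aⁿ ∈ R}`, as an
overring of `R`. -/
def kaplansky (I : Ideal R) : Subalgebra R K where
  carrier := {u : K | ∀ a ∈ I, ∃ n : ℕ, 0 < n ∧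
    ∃ r : R, u * (algebraMap R K a) ^ n = algebraMap R K r}
  mul_mem' := by
    intro u v hu hv a ha
    obtain ⟨n, hn, r, hr⟩ := hu a ha
    obtain ⟨m, hm, s, hs⟩ := hv a ha
    refine ⟨n + m, by omega, r * s, ?_⟩
    rw [map_mul, ← hr, ← hs, pow_add]
    ring
  one_mem' := by
    intro a ha
    exact ⟨1, one_pos, a, by rw [pow_one, one_mul]⟩
  add_mem' := by
    intro u v hu hv a ha
    obtain ⟨n, hn, r, hr⟩ := hu a ha
    obtain ⟨m, hm, s, hs⟩ := hv a ha
    refine ⟨n + m, by omega, r * a ^ m + s * a ^ n, ?_⟩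
    rw [map_add, map_mul, map_mul, map_pow, map_pow, ← hr, ← hs, pow_add, add_mul]
    ring
  zero_mem' := by
    intro a ha
    exact ⟨1, one_pos, 0, by rw [map_zero, zero_mul]⟩
  algebraMap_mem' := by
    intro r a ha
    exact ⟨1, one_pos, r * a, by rw [map_mul, pow_one]⟩

/-- The Nagata (ideal) transform `T(I) = ⋃_{n ≥ 1} (R : Iⁿ)`, as an overring of `R`. -/
def nagata (I : Ideal R) : Subalgebra R K where
  carrier := {x : K | ∃ n : ℕ, ∀ y ∈ I ^ (n + 1),
    ∃ r : R, x * algebraMap R K y = algebraMap R K r}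
  mul_mem' := by
    intro x x' hx hx'
    obtain ⟨n, hn⟩ := hx
    obtain ⟨m, hm⟩ := hx'
    refine ⟨n + m + 1, fun y hy => ?_⟩
    rw [show n + m + 1 + 1 = (n + 1) + (m + 1) by omega, pow_add] at hy
    refine Submodule.mul_induction_on hy ?_ ?_
    · intro a ha b hb
      obtain ⟨r, hr⟩ := hn a ha
      obtain ⟨s, hs⟩ := hm b hb
      refine ⟨r * s, ?_⟩
      rw [map_mul, map_mul, ← hr, ← hs]
      ring
    · rintro y1 y2 ⟨r1, h1⟩ ⟨r2, h2⟩
      exact ⟨r1 + r2, by rw [map_add, map_add, mul_add, h1, h2]⟩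
  one_mem' := ⟨0, fun y _ => ⟨y, by rw [one_mul]⟩⟩
  add_mem' := by
    intro x x' hx hx'
    obtain ⟨n, hn⟩ := hx
    obtain ⟨m, hm⟩ := hx'
    refine ⟨n + m + 1, fun y hy => ?_⟩
    have h1 : y ∈ I ^ (n + 1) := Ideal.pow_le_pow_right (by omega) hy
    have h2 : y ∈ I ^ (m + 1) := Ideal.pow_le_pow_right (by omega) hy
    obtain ⟨r, hr⟩ := hn y h1
    obtain ⟨s, hs⟩ := hm y h2
    exact ⟨r + s, by rw [map_add, add_mul, hr, hs]⟩
  zero_mem' := ⟨0, fun y _ => ⟨0, by rw [map_zero, zero_mul]⟩⟩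
  algebraMap_mem' := by
    intro r
    exact ⟨0, fun y _ => ⟨r * y, by rw [map_mul]⟩⟩

end Overring

section AuxProofs
set_option linter.unusedSectionVars false
set_option linter.unusedVariables false
set_option linter.unnecessarySimpa false
variable {R : Type*} [CommRing R] [IsDomain R]
variable {K : Type*} [Field K] [Algebra R K] [IsFractionRing R K]

variable {R : Type*} [CommRing R] [IsDomain R]
variable {K : Type*} [Field K] [Algebra R K] [IsFractionRing R K]
lemma alg_inj : Function.Injective (algebraMap R K) := IsFractionRing.injective R K
lemma mem_toK {J : Ideal R} {z : K} : z ∈ toK R K J ↔ ∃ r ∈ J, algebraMap R K r = z := by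
  simp [toK, Submodule.mem_map, Algebra.linearMap_apply]
lemma alg_mem_toK {J : Ideal R} {r : R} : algebraMap R K r ∈ toK R K J ↔ r ∈ J := by
  rw [mem_toK]
  constructor
  · rintro ⟨r', hr', h⟩; rwa [← alg_inj h]
  · exact fun h => ⟨r, h, rfl⟩
lemma toK_le_one (J : Ideal R) : toK R K J ≤ (1 : Submodule R K) := by
  rintro z hz
  obtain ⟨r, _, rfl⟩ := mem_toK.mp hz
  exact Submodule.mem_one.mpr ⟨r, rfl⟩
lemma mem_vOp {M : Submodule R K} {x : K} :
    x ∈ vOp M ↔ ∀ y, (∀ m ∈ M, y * m ∈ (1 : Submodule R K)) → x * y ∈ (1 : Submodule R K) := by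
  rw [vOp, Submodule.mem_div_iff_forall_mul_mem]
  constructor <;> intro h y hy
  · exact h y (Submodule.mem_div_iff_forall_mul_mem.mpr hy)
  · exact h y (Submodule.mem_div_iff_forall_mul_mem.mp hy)
lemma vOp_le_tOp {J M : Submodule R K} (h1 : J ≠ ⊥) (h2 : J.FG) (h3 : J ≤ M) :
    vOp J ≤ tOp M := le_sSup ⟨J, h1, h2, h3, rfl⟩
lemma tOp_le {M P : Submodule R K} (h : ∀ J : Submodule R K, J ≠ ⊥ → J.FG → J ≤ M → vOp J ≤ P) :
    tOp M ≤ P := by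
  apply sSup_le
  rintro V ⟨J, h1, h2, h3, rfl⟩
  exact h J h1 h2 h3
lemma le_tOp (M : Submodule R K) : M ≤ tOp M := by
  intro x hx
  rcases eq_or_ne x 0 with rfl | hx0
  · exact Submodule.zero_mem _
  refine vOp_le_tOp (J := Submodule.span R {x}) ?_ (Submodule.fg_span_singleton x)
    ((Submodule.span_singleton_le_iff_mem x M).mpr hx) ?_
  · simpa [Submodule.span_singleton_eq_bot] using hx0
  · rw [mem_vOp]
    intro y hy
    rw [mul_comm]
    exact hy x (Submodule.mem_span_singleton_self x)
lemma tOp_mono {M N : Submodule R K} (h : M ≤ N) : tOp M ≤ tOp N :=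
  tOp_le fun J h1 h2 h3 => vOp_le_tOp h1 h2 (h3.trans h)

/-- The conductor ideal `(I :_R d) = {r ∈ R : r·d ∈ I K}`. -/
def condIdeal (I : Ideal R) (d : K) : Ideal R where
  carrier := {r | algebraMap R K r * d ∈ toK R K I}
  add_mem' := by
    intro a b ha hb
    simp only [Set.mem_setOf_eq, map_add, add_mul] at *
    exact Submodule.add_mem _ ha hb
  zero_mem' := by
    simp only [Set.mem_setOf_eq, map_zero, zero_mul]
    exact Submodule.zero_mem _
  smul_mem' := by
    intro c r h
    simp only [Set.mem_setOf_eq, smul_eq_mul, map_mul, mul_assoc] at *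
    rw [← Algebra.smul_def]
    exact Submodule.smul_mem _ _ h

lemma mem_condIdeal {I : Ideal R} {d : K} {r : R} :
    r ∈ condIdeal I d ↔ algebraMap R K r * d ∈ toK R K I := Iff.rfl

lemma condIdeal_isT {I : Ideal R} (hI : IsTIdeal K I) (d : K) :
    IsTIdeal K (condIdeal I d) := by
  refine le_antisymm (tOp_le ?_) (le_tOp _)
  intro F hF0 hFfg hFle w hw
  have hle1 : toK R K (condIdeal I d) ≤ (1 : Submodule R K) := toK_le_one _
  have hw1 : w ∈ (1 : Submodule R K) := by
    have := mem_vOp.mp hw 1 (fun m hm => by simpa using hle1 (hFle hm))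
    simpa using this
  obtain ⟨ρ, hρ⟩ := Submodule.mem_one.mp hw1
  rw [← hρ, alg_mem_toK, mem_condIdeal, hρ]
  rcases eq_or_ne d 0 with rfl | hd0
  · simpa using Submodule.zero_mem (toK R K I)
  set F' := F * Submodule.span R {d} with hF'
  have hF'fg : F'.FG := hFfg.mul (Submodule.fg_span_singleton d)
  have hF'0 : F' ≠ ⊥ := by
    obtain ⟨f, hf, hf0⟩ := Submodule.exists_mem_ne_zero_of_ne_bot hF0
    have : f * d ∈ F' := Submodule.mul_mem_mul hf (Submodule.mem_span_singleton_self d)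
    intro hbot
    rw [hbot, Submodule.mem_bot] at this
    exact hf0 (by
      have := mul_eq_zero.mp this
      tauto)
  have hF'le : F' ≤ toK R K I := by
    rw [hF']
    refine Submodule.mul_le.mpr ?_
    intro f hf z hz
    obtain ⟨c, rfl⟩ := Submodule.mem_span_singleton.mp hz
    obtain ⟨r, hr, rfl⟩ := mem_toK.mp (hFle hf)
    have : algebraMap R K r * d ∈ toK R K I := hr
    have h2 : c • (algebraMap R K r * d) ∈ toK R K I := Submodule.smul_mem _ _ this
    convert h2 using 1
    rw [mul_smul_comm]
  have hsub : vOp F' ≤ toK R K I := hI ▸ vOp_le_tOp hF'0 hF'fg hF'le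
  refine hsub ?_
  rw [mem_vOp]
  intro y hy
  have h3 : ∀ m ∈ F, (d * y) * m ∈ (1 : Submodule R K) := by
    intro m hm
    have := hy (m * d) (Submodule.mul_mem_mul hm (Submodule.mem_span_singleton_self d))
    convert this using 1; ring
  have := mem_vOp.mp hw (d * y) h3
  convert this using 1; ring

lemma toK_mono {P Q : Ideal R} (h : P ≤ Q) : toK R K P ≤ toK R K Q :=
  Submodule.map_mono h

lemma isT_sSup_chain {c : Set (Ideal R)} (hne : c.Nonempty) (hch : IsChain (· ≤ ·) c)
    (ht : ∀ P ∈ c, IsTIdeal K P) : IsTIdeal K (sSup c) := by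
  refine le_antisymm (tOp_le ?_) (le_tOp _)
  intro F hF0 hFfg hFle
  have hmap : toK R K (sSup c) = ⨆ p : c, toK R K (p : Ideal R) := by
    rw [sSup_eq_iSup']
    exact Submodule.map_iSup _ _
  have hcompact := (Submodule.fg_iff_compact F).mp hFfg
  rw [hmap] at hFle
  have hdir : DirectedOn (· ≤ ·) (Set.range fun p : c => toK R K (p : Ideal R)) := by
    rintro _ ⟨p, rfl⟩ _ ⟨q, rfl⟩
    rcases hch.total p.2 q.2 with h | h
    · exact ⟨toK R K (q : Ideal R), ⟨q, rfl⟩, toK_mono h, le_rfl⟩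
    · exact ⟨toK R K (p : Ideal R), ⟨p, rfl⟩, le_rfl, toK_mono h⟩
  have hsne : (Set.range fun p : c => toK R K (p : Ideal R)).Nonempty := by
    obtain ⟨y, hy⟩ := hne
    exact ⟨toK R K y, ⟨y, hy⟩, rfl⟩
  obtain ⟨x, hxmem, hFx⟩ :=
    (CompleteLattice.isCompactElement_iff_le_of_directed_sSup_le (Submodule R K) F).mp hcompact
      _ hsne hdir (by rw [sSup_range]; exact hFle)
  obtain ⟨p, rfl⟩ := hxmem
  calc vOp F ≤ tOp (toK R K (p : Ideal R)) := vOp_le_tOp hF0 hFfg hFx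
    _ = toK R K (p : Ideal R) := ht p p.2
    _ ≤ toK R K (sSup c) := toK_mono (le_sSup p.2)

lemma exists_tMax {J : Ideal R} (hJ : J ≠ ⊤) (ht : IsTIdeal K J) :
    ∃ M : Ideal R, J ≤ M ∧ IsTMaximal K M := by
  have hzorn : ∀ c ⊆ {P : Ideal R | P ≠ ⊤ ∧ IsTIdeal K P}, IsChain (· ≤ ·) c →
      ∀ y ∈ c, ∃ ub ∈ {P : Ideal R | P ≠ ⊤ ∧ IsTIdeal K P}, ∀ z ∈ c, z ≤ ub := by
    intro c hcs hch y hy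
    refine ⟨sSup c, ⟨?_, isT_sSup_chain ⟨y, hy⟩ hch fun P hP => (hcs hP).2⟩,
      fun z hz => le_sSup hz⟩
    intro htop
    have h1 : (1 : R) ∈ sSup c := htop ▸ Submodule.mem_top
    obtain ⟨P, hPc, hP1⟩ := (Submodule.mem_sSup_of_directed ⟨y, hy⟩ hch.directedOn).mp h1
    exact (hcs hPc).1 (Ideal.eq_top_iff_one P |>.mpr hP1)
  obtain ⟨M, hJM, hMmax⟩ :=
    zorn_le_nonempty₀ {P : Ideal R | P ≠ ⊤ ∧ IsTIdeal K P} hzorn J ⟨hJ, ht⟩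
  refine ⟨M, hJM, hMmax.prop.1, hMmax.prop.2, fun J' h1 h2 h3 => le_antisymm ?_ h3⟩
  exact hMmax.le_of_ge ⟨h1, h2⟩ h3

lemma zero_mem_ZSet {I : Ideal R} (htop : I ≠ ⊤) : (0 : R) ∈ ZSet I :=
  ⟨1, by simpa using htop ∘ (Ideal.eq_top_iff_one I).mpr, by simpa using I.zero_mem⟩

lemma one_not_mem_ZSet {I : Ideal R} : (1 : R) ∉ ZSet I := by
  rintro ⟨a, ha, hmul⟩
  rw [one_mul] at hmul
  exact ha hmul

lemma mul_not_mem_ZSet {I : Ideal R} {s t : R} (hs : s ∉ ZSet I) (ht : t ∉ ZSet I) :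
    s * t ∉ ZSet I := by
  rintro ⟨a, ha, hmul⟩
  have hta : t * a ∉ I := fun h => ht ⟨a, ha, h⟩
  exact hs ⟨t * a, hta, by rw [← mul_assoc]; exact hmul⟩

lemma exists_maxPrimeOfZ {I J : Ideal R} (htop : I ≠ ⊤) (hJZ : (J : Set R) ⊆ ZSet I) :
    ∃ Q : Ideal R, J ≤ Q ∧ MaxPrimeOfZ I Q := by
  have hzorn : ∀ c ⊆ {P : Ideal R | (P : Set R) ⊆ ZSet I}, IsChain (· ≤ ·) c →
      ∀ y ∈ c, ∃ ub ∈ {P : Ideal R | (P : Set R) ⊆ ZSet I}, ∀ z ∈ c, z ≤ ub := by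
    intro c hcs hch y hy
    refine ⟨sSup c, ?_, fun z hz => le_sSup hz⟩
    intro z hz
    obtain ⟨P, hPc, hPz⟩ := (Submodule.mem_sSup_of_directed ⟨y, hy⟩ hch.directedOn).mp hz
    exact hcs hPc hPz
  obtain ⟨Q, hJQ, hQmax⟩ :=
    zorn_le_nonempty₀ {P : Ideal R | (P : Set R) ⊆ ZSet I} hzorn J hJZ
  · have hQZ : (Q : Set R) ⊆ ZSet I := hQmax.1
    have hprime : Q.IsPrime := by
      constructor
      · intro h
        exact one_not_mem_ZSet (hQZ (h ▸ Submodule.mem_top))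
      · intro a b hab
        by_contra hcon
        push_neg at hcon
        obtain ⟨ha, hb⟩ := hcon
        have key : ∀ x : R, x ∉ Q → ∃ q r : R, q ∈ Q ∧ q + r * x ∉ ZSet I := by
          intro x hx
          by_contra hcon2
          push_neg at hcon2
          have hsub : ((Q ⊔ Ideal.span {x} : Ideal R) : Set R) ⊆ ZSet I := by
            intro z hz
            obtain ⟨q, hq, w, hw, rfl⟩ := Submodule.mem_sup.mp hz
            obtain ⟨r, rfl⟩ := Ideal.mem_span_singleton'.mp hw
            exact hcon2 q r hq
          have := hQmax.le_of_ge hsub le_sup_left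
          exact hx (this (Ideal.mem_sup_right (Ideal.subset_span rfl)))
        obtain ⟨q₁, r₁, hq₁, hz₁⟩ := key a ha
        obtain ⟨q₂, r₂, hq₂, hz₂⟩ := key b hb
        refine mul_not_mem_ZSet hz₁ hz₂ (hQZ ?_)
        have : (q₁ + r₁ * a) * (q₂ + r₂ * b)
            = q₁ * (q₂ + r₂ * b) + (r₁ * q₂) * a + (r₁ * r₂) * (a * b) := by ring
        rw [this]
        exact Q.add_mem (Q.add_mem (Q.mul_mem_right _ hq₁)
          (Q.mul_mem_right _ (Q.mul_mem_left _ hq₂))) (Q.mul_mem_left _ hab)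
    exact ⟨Q, hJQ, hprime, hQZ, fun Q' h1 h2 h3 => le_antisymm (hQmax.le_of_ge h2 h3) h3⟩


lemma comparability (hR : IsPVMD R K) {M : Ideal R} (hM : IsTMaximal K M) (α β : R)
    (hα : α ≠ 0) : ∃ u, u ∉ M ∧ ∃ c : R, u * β = α * c ∨ u * α = β * c := by
  set G : Ideal R := Ideal.span {α, β} with hG
  have hG0 : G ≠ ⊥ := by
    intro h
    rw [hG, Ideal.span_eq_bot] at h
    exact hα (h α (by simp))
  have hGfg : G.FG := Submodule.fg_span (Set.toFinite _)
  have hinv := hR G hG0 hGfg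
  set a := algebraMap R K α with ha
  set b := algebraMap R K β with hb
  have htoK : toK R K G = Submodule.span R {a, b} := by
    rw [toK, hG, Ideal.span, Submodule.map_span]
    congr 1
    simp [Set.image_insert_eq, ha, hb, Algebra.linearMap_apply]
  set H := dual (toK R K G) with hH
  have hnot : ¬ (toK R K G * H ≤ toK R K M) := by
    intro hle
    have h1 : (1 : Submodule R K) ≤ toK R K M := by
      rw [← hinv]
      calc tOp (toK R K G * dual (toK R K G)) ≤ tOp (toK R K M) := tOp_mono hle
        _ = toK R K M := hM.2.1
    have h2 : (1 : K) ∈ toK R K M := h1 (Submodule.mem_one.mpr ⟨1, map_one _⟩)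
    rw [show (1 : K) = algebraMap R K 1 from (map_one _).symm, alg_mem_toK] at h2
    exact hM.1 ((Ideal.eq_top_iff_one M).mpr h2)
  obtain ⟨g, hgGH, hgM⟩ := SetLike.not_le_iff_exists.mp hnot
  have hdecomp : ∃ h₁ ∈ H, ∃ h₂ ∈ H, g = a * h₁ + b * h₂ := by
    refine Submodule.mul_induction_on hgGH ?_ ?_
    · intro m hm h hh
      rw [htoK] at hm
      obtain ⟨r, t, hrt⟩ := Submodule.mem_span_pair.mp hm
      refine ⟨r • h, Submodule.smul_mem _ _ hh, t • h, Submodule.smul_mem _ _ hh, ?_⟩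
      rw [← hrt, add_mul, smul_mul_assoc, smul_mul_assoc, mul_smul_comm, mul_smul_comm]
    · rintro g₁ g₂ ⟨h₁, hh₁, h₂, hh₂, rfl⟩ ⟨h₁', hh₁', h₂', hh₂', rfl⟩
      exact ⟨h₁ + h₁', Submodule.add_mem _ hh₁ hh₁', h₂ + h₂', Submodule.add_mem _ hh₂ hh₂',
        by ring⟩
  obtain ⟨h₁, hh₁, h₂, hh₂, rfl⟩ := hdecomp
  have haG : a ∈ toK R K G := by
    rw [htoK]; exact Submodule.subset_span (by simp)
  have hbG : b ∈ toK R K G := by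
    rw [htoK]; exact Submodule.subset_span (by simp)
  have div1 : ∀ h ∈ H, ∀ z ∈ toK R K G, h * z ∈ (1 : Submodule R K) := by
    intro h hh z hz
    exact Submodule.mem_div_iff_forall_mul_mem.mp hh z hz
  have w1 : a * h₁ ∈ (1 : Submodule R K) := by rw [mul_comm]; exact div1 h₁ hh₁ a haG
  have w2 : b * h₁ ∈ (1 : Submodule R K) := by rw [mul_comm]; exact div1 h₁ hh₁ b hbG
  have w3 : a * h₂ ∈ (1 : Submodule R K) := by rw [mul_comm]; exact div1 h₂ hh₂ a haG
  have w4 : b * h₂ ∈ (1 : Submodule R K) := by rw [mul_comm]; exact div1 h₂ hh₂ b hbG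
  obtain ⟨p₁, hp₁⟩ := Submodule.mem_one.mp w1
  obtain ⟨q₁, hq₁⟩ := Submodule.mem_one.mp w2
  obtain ⟨p₂, hp₂⟩ := Submodule.mem_one.mp w3
  obtain ⟨q₂, hq₂⟩ := Submodule.mem_one.mp w4
  have hg1 : a * h₁ + b * h₂ = algebraMap R K (p₁ + q₂) := by
    rw [map_add, hp₁, hq₂]
  have humem : p₁ + q₂ ∉ M := by
    intro hmem
    apply hgM
    rw [hg1, alg_mem_toK]
    exact hmem
  by_cases hcase : p₁ ∈ M
  · have hq₂M : q₂ ∉ M := fun h => humem (M.add_mem hcase h)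
    refine ⟨q₂, hq₂M, p₂, Or.inr ?_⟩
    apply alg_inj (K := K)
    rw [map_mul, map_mul, hq₂, hp₂]
    rw [ha] at hp₂ w3
    rw [hb] at hq₂ w4
    ring
  · refine ⟨p₁, hcase, q₁, Or.inl ?_⟩
    apply alg_inj (K := K)
    rw [map_mul, map_mul, hp₁, hq₁]
    ring

lemma part1_main (hR : IsPVMD R K) {I : Ideal R} (hbot : I ≠ ⊥) (htop : I ≠ ⊤)
    (htI : IsTIdeal K I) {x : K}
    (hQ : ∀ Q : Ideal R, MaxPrimeOfZ I Q → x ∈ loc K Q)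
    (hM : ∀ M : Ideal R, IsTMaximal K M → ¬ I ≤ M → x ∈ loc K M)
    {z : K} (hz : z ∈ toK R K I) : x * z ∈ toK R K I := by
  obtain ⟨a, haI, rfl⟩ := mem_toK.mp hz
  set d := x * algebraMap R K a with hd
  by_contra hxa
  set J := condIdeal I d with hJ
  have key : ∀ s cc : R, x * algebraMap R K s = algebraMap R K cc → s ∈ J := by
    intro s cc h
    show algebraMap R K s * d ∈ toK R K I
    have heq : algebraMap R K s * d = algebraMap R K (cc * a) := by
      rw [hd, map_mul, ← h]; ring
    rw [heq, alg_mem_toK]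
    exact I.mul_mem_left cc haI
  have hJT : IsTIdeal K J := condIdeal_isT htI d
  have hJtop : J ≠ ⊤ := by
    intro h
    apply hxa
    have h1 : (1 : R) ∈ J := h ▸ Submodule.mem_top
    have := mem_condIdeal.mp h1
    rwa [map_one, one_mul] at this
  obtain ⟨M, hJM, hMt⟩ := exists_tMax hJtop hJT
  by_cases hIM : I ≤ M
  · by_cases hMZ : (M : Set R) ⊆ ZSet I
    · obtain ⟨Q, hMQ, hQmax⟩ := exists_maxPrimeOfZ htop hMZ
      obtain ⟨cc, s, hs, hxs⟩ := hQ Q hQmax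
      exact hs (hMQ (hJM (key s cc hxs)))
    · have hrex : ∃ r ∈ J, r ∉ ZSet I := by
        by_contra h
        push_neg at h
        obtain ⟨Q, hJQ, hQmax⟩ := exists_maxPrimeOfZ htop (fun w hw => h w hw)
        obtain ⟨cc, s, hs, hxs⟩ := hQ Q hQmax
        exact hs (hJQ (key s cc hxs))
      obtain ⟨r, hrJ, hrZ⟩ := hrex
      have hr0 : r ≠ 0 := fun h => hrZ (h ▸ zero_mem_ZSet htop)
      obtain ⟨i₀, hi₀I, hi₀⟩ := mem_toK.mp (mem_condIdeal.mp hrJ)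
      obtain ⟨u, huM, c, hc⟩ := comparability hR hMt r i₀ hr0
      rcases hc with huc | huc
      · -- u * i₀ = r * c
        by_cases hcI : c ∈ I
        · apply huM
          apply hJM
          show algebraMap R K u * d ∈ toK R K I
          have heq : algebraMap R K r * (algebraMap R K u * d)
              = algebraMap R K r * algebraMap R K c := by
            rw [show algebraMap R K r * (algebraMap R K u * d)
                = algebraMap R K u * (algebraMap R K r * d) by ring, ← hi₀,
              ← map_mul, ← map_mul, huc]
          have hralg : algebraMap R K r ≠ 0 :=
            fun h => hr0 (alg_inj (h.trans (map_zero (algebraMap R K)).symm))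
          have := mul_left_cancel₀ hralg heq
          rw [this, alg_mem_toK]
          exact hcI
        · exact hrZ ⟨c, hcI, by rw [← huc]; exact I.mul_mem_left u hi₀I⟩
      · -- u * r = i₀ * c
        have huI : u ∉ I := fun h => huM (hIM h)
        exact hrZ ⟨u, huI, by rw [mul_comm, huc]; exact I.mul_mem_right c hi₀I⟩
  · obtain ⟨cc, s, hs, hxs⟩ := hM M hMt hIM
    exact hs (hJM (key s cc hxs))


lemma exists_not_mem_one {I : Ideal R} (hbot : I ≠ ⊥) (htop : I ≠ ⊤) :
    ∃ x : K, x ∉ (1 : Submodule R K) := by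
  obtain ⟨r, hrI, hr0⟩ := Submodule.exists_mem_ne_zero_of_ne_bot hbot
  refine ⟨(algebraMap R K r)⁻¹, ?_⟩
  intro hmem
  obtain ⟨c, hc⟩ := Submodule.mem_one.mp hmem
  have hralg : algebraMap R K r ≠ 0 := fun h => hr0 (alg_inj (h.trans (map_zero _).symm))
  have h1 : algebraMap R K (c * r) = 1 := by rw [map_mul, hc, inv_mul_cancel₀ hralg]
  have h2 : c * r = 1 := alg_inj (by rw [h1, map_one])
  exact htop (I.eq_top_of_isUnit_mem hrI (IsUnit.of_mul_eq_one (a := r) c (by rw [mul_comm]; exact h2)))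

lemma mem_endoRing {I : Ideal R} {x : K} :
    x ∈ endoRing K I ↔ ∀ y ∈ toK R K I, x * y ∈ toK R K I := Iff.rfl

lemma endoRing_tLinked {I : Ideal R} (hbot : I ≠ ⊥) (htop : I ≠ ⊤) (htI : IsTIdeal K I) :
    IsTLinked (K := K) (endoRing K I) := by
  intro J hJfg hJdual
  have hJ0 : J ≠ ⊥ := by
    rintro rfl
    obtain ⟨xx, hxx⟩ := exists_not_mem_one (K := K) hbot htop
    apply hxx
    have hmem : xx ∈ dual (toK R K (⊥ : Ideal R)) := by
      rw [dual, Submodule.mem_div_iff_forall_mul_mem]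
      intro y hy
      obtain ⟨r, hr, rfl⟩ := mem_toK.mp hy
      obtain rfl : r = 0 := hr
      rw [map_zero, mul_zero]
      exact Submodule.zero_mem _
    rwa [hJdual] at hmem
  refine le_antisymm ?_ ?_
  · intro u hu
    rw [dual, Submodule.mem_div_iff_forall_mul_mem] at hu
    have hT : ∀ z ∈ toK R K I, u * z ∈ toK R K I := by
      intro z hz
      have hjc : ∀ j ∈ J, algebraMap R K j * (u * z) ∈ toK R K I := by
        intro j hj
        have hjmem : algebraMap R K j ∈ extendI J (endoRing K I) :=
          Submodule.subset_span ⟨j, hj, rfl⟩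
        obtain ⟨t, ht⟩ := Submodule.mem_one.mp (hu _ hjmem)
        have ht' : (t : K) = u * algebraMap R K j := ht
        have h2 : (t : K) * z ∈ toK R K I := (mem_endoRing.mp t.2) z hz
        have heq : algebraMap R K j * (u * z) = (t : K) * z := by rw [ht']; ring
        rwa [heq]
      rcases eq_or_ne (u * z) 0 with h0 | h0
      · rw [h0]; exact Submodule.zero_mem _
      set c := u * z with hc
      set F := toK R K J * Submodule.span R {c} with hF
      have htoKfg : (toK R K J).FG := Submodule.FG.map (f := Algebra.linearMap R K) hJfg
      have hFfg : F.FG := htoKfg.mul (Submodule.fg_span_singleton c)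
      have hF0 : F ≠ ⊥ := by
        obtain ⟨j₀, hj₀, hj₀0⟩ := Submodule.exists_mem_ne_zero_of_ne_bot hJ0
        have hmem : algebraMap R K j₀ * c ∈ F :=
          Submodule.mul_mem_mul (alg_mem_toK.mpr hj₀) (Submodule.mem_span_singleton_self c)
        intro hbot'
        rw [hbot', Submodule.mem_bot] at hmem
        rcases mul_eq_zero.mp hmem with h | h
        · exact hj₀0 (alg_inj (h.trans (map_zero _).symm))
        · exact h0 h
      have hFle : F ≤ toK R K I := by
        rw [hF]
        refine Submodule.mul_le.mpr ?_
        intro f hf w hw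
        obtain ⟨j, hj, rfl⟩ := mem_toK.mp hf
        obtain ⟨e, rfl⟩ := Submodule.mem_span_singleton.mp hw
        rw [mul_smul_comm]
        exact Submodule.smul_mem _ _ (hjc j hj)
      have hsub : vOp F ≤ toK R K I := htI ▸ vOp_le_tOp hF0 hFfg hFle
      refine hsub ?_
      rw [mem_vOp]
      intro y hy
      have hyc : y * c ∈ dual (toK R K J) := by
        rw [dual, Submodule.mem_div_iff_forall_mul_mem]
        intro m hm
        have h3 : y * (m * c) ∈ (1 : Submodule R K) :=
          hy _ (Submodule.mul_mem_mul hm (Submodule.mem_span_singleton_self c))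
        have heq : y * c * m = y * (m * c) := by ring
        rwa [heq]
      rw [hJdual] at hyc
      rw [mul_comm]
      exact hyc
    exact Submodule.mem_one.mpr ⟨⟨u, hT⟩, rfl⟩
  · intro v hv
    obtain ⟨t, rfl⟩ := Submodule.mem_one.mp hv
    rw [dual, Submodule.mem_div_iff_forall_mul_mem]
    intro y hy
    have hle : extendI J (endoRing K I) ≤ (1 : Submodule (endoRing K I) K) := by
      rw [extendI, Submodule.span_le]
      rintro _ ⟨j, hj, rfl⟩
      exact Submodule.mem_one.mpr ⟨algebraMap R (endoRing K I) j, rfl⟩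
    obtain ⟨t', rfl⟩ := Submodule.mem_one.mp (hle hy)
    exact Submodule.mem_one.mpr ⟨t * t', rfl⟩

lemma part2_main {I : Ideal R} (hbot : I ≠ ⊥) (htop : I ≠ ⊤) (htI : IsTIdeal K I)
    (htQR : IsTQR R K) {x : K} (hx : ∀ z ∈ toK R K I, x * z ∈ toK R K I) :
    (∀ Q : Ideal R, MaxPrimeOfZ I Q → x ∈ loc K Q) ∧
    (∀ M : Ideal R, IsTMaximal K M → ¬ I ≤ M → x ∈ loc K M) := by
  constructor
  · intro Q hQ
    obtain ⟨S, hS⟩ := htQR.2 (endoRing K I) (endoRing_tLinked hbot htop htI)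
    have hxT : x ∈ (endoRing K I : Set K) := hx
    rw [hS] at hxT
    obtain ⟨aa, s, hsS, hxs⟩ := hxT
    have hs0 : s ≠ 0 := by
      rintro rfl
      obtain ⟨i, hiI, hi0⟩ := Submodule.exists_mem_ne_zero_of_ne_bot hbot
      have hialg : algebraMap R K i ≠ 0 := fun h => hi0 (alg_inj (h.trans (map_zero _).symm))
      have hbad : (algebraMap R K i)⁻¹ ∈ (endoRing K I : Set K) := by
        rw [hS]
        exact ⟨0, 0, hsS, by rw [map_zero, mul_zero]⟩
      have h1 : (algebraMap R K i)⁻¹ * algebraMap R K i ∈ toK R K I :=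
        (mem_endoRing.mp hbad) _ (alg_mem_toK.mpr hiI)
      rw [inv_mul_cancel₀ hialg, show (1 : K) = algebraMap R K 1 from (map_one _).symm,
        alg_mem_toK] at h1
      exact htop ((Ideal.eq_top_iff_one I).mpr h1)
    have hsZ : s ∉ ZSet I := by
      rintro ⟨a', ha'I, hsa'⟩
      have hsalg : algebraMap R K s ≠ 0 := fun h => hs0 (alg_inj (h.trans (map_zero _).symm))
      have hinvT : (algebraMap R K s)⁻¹ ∈ (endoRing K I : Set K) := by
        rw [hS]
        exact ⟨1, s, hsS, by rw [inv_mul_cancel₀ hsalg, map_one]⟩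
      have h1 : (algebraMap R K s)⁻¹ * algebraMap R K (s * a') ∈ toK R K I :=
        (mem_endoRing.mp hinvT) _ (alg_mem_toK.mpr hsa')
      rw [map_mul, ← mul_assoc, inv_mul_cancel₀ hsalg, one_mul, alg_mem_toK] at h1
      exact ha'I h1
    exact ⟨aa, s, fun hsQ => hsZ (hQ.2.1 hsQ), hxs⟩
  · intro M hM hIM
    obtain ⟨a, haI, haM⟩ := SetLike.not_le_iff_exists.mp hIM
    obtain ⟨i, hiI, hieq⟩ := mem_toK.mp (hx _ (alg_mem_toK.mpr haI))
    exact ⟨i, a, haM, hieq.symm⟩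

end AuxProofs

section Statements

variable {R : Type*} [CommRing R] [IsDomain R]
variable {K : Type*} [Field K] [Algebra R K] [IsFractionRing R K]

/-- Let `I` be a `t`-ideal of a PVMD `R`, `{Q_α}` the maximal prime
ideals of `Z(R, I)` and `{M_β}` the `t`-maximal ideals of `R` not containing `I`. Then
`(I : I) ⊇ (⋂ R_{Q_α}) ∩ (⋂ R_{M_β})`, with equality when `R` is a `tQR`-domain. -/
theorem statement_11 (hR : IsPVMD R K) (I : Ideal R) (hbot : I ≠ ⊥) (htop : I ≠ ⊤)
    (htI : IsTIdeal K I) :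
    ((⋂ Q ∈ {Q : Ideal R | MaxPrimeOfZ I Q}, loc K Q) ∩
        (⋂ M ∈ {M : Ideal R | IsTMaximal K M ∧ ¬ I ≤ M}, loc K M) ⊆
      ((toK R K I / toK R K I : Submodule R K) : Set K)) ∧
      (IsTQR R K →
        ((toK R K I / toK R K I : Submodule R K) : Set K) =
          (⋂ Q ∈ {Q : Ideal R | MaxPrimeOfZ I Q}, loc K Q) ∩
            (⋂ M ∈ {M : Ideal R | IsTMaximal K M ∧ ¬ I ≤ M}, loc K M)) := by
  have hsub1 : ((⋂ Q ∈ {Q : Ideal R | MaxPrimeOfZ I Q}, loc K Q) ∩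
        (⋂ M ∈ {M : Ideal R | IsTMaximal K M ∧ ¬ I ≤ M}, loc K M) ⊆
      ((toK R K I / toK R K I : Submodule R K) : Set K)) := by
    rintro x ⟨hxQ, hxM⟩
    rw [Set.mem_iInter₂] at hxQ hxM
    rw [SetLike.mem_coe, Submodule.mem_div_iff_forall_mul_mem]
    intro z hz
    exact part1_main hR hbot htop htI (fun Q hQ => hxQ Q hQ)
      (fun M h1 h2 => hxM M ⟨h1, h2⟩) hz
  refine ⟨hsub1, fun htqr => Set.Subset.antisymm ?_ hsub1⟩
  intro x hx
  rw [SetLike.mem_coe, Submodule.mem_div_iff_forall_mul_mem] at hx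
  obtain ⟨h1, h2⟩ := part2_main hbot htop htI htqr hx
  exact ⟨Set.mem_iInter₂.mpr (fun Q hQ => h1 Q hQ),
    Set.mem_iInter₂.mpr (fun M hM => h2 M hM.1 hM.2)⟩

end Statements

end

end PVMDPaper
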